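/- Let p : [0, 1/3] → ℝ be continuous. Then for every x ∈ [0,1]: if x ≤ 2/3, then ∫_{1−x}^{1} p(min(1−x, 1−y, x+y−1)) dy = 2·∫₀^{x/2} p(t) dt; and if x ≥ 2/3, then ∫_{1−x}^{1} p(min(1−x, 1−y, x+y−1)) dy = (3x−2)·p(1−x) + 2·∫₀^{1−x} p(t) dt. -/
import Mathlib


open Set intervalIntegral

/-- Projection density of a layered measure on the triangle: for continuous
`p : [0,1/3] → ℝ` and `x ∈ [0,1]`, the integral `∫_{1−x}^{1} p(min(1−x, 1−y, x+y−1)) dy`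
equals `2∫₀^{x/2} p` when `x ≤ 2/3`, and `(3x−2)·p(1−x) + 2∫₀^{1−x} p` when `x ≥ 2/3`. -/
theorem layered_projection (p : ℝ → ℝ) (hp : ContinuousOn p (Set.Icc (0 : ℝ) (1/3))) :
    ∀ x ∈ Set.Icc (0 : ℝ) 1,
      (x ≤ 2/3 →
        (∫ y in (1 - x)..1, p (min (1 - x) (min (1 - y) (x + y - 1)))) =
          2 * ∫ t in (0 : ℝ)..(x/2), p t) ∧
      (2/3 ≤ x →
        (∫ y in (1 - x)..1, p (min (1 - x) (min (1 - y) (x + y - 1)))) =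
          (3*x - 2) * p (1 - x) + 2 * ∫ t in (0 : ℝ)..(1 - x), p t) := by
  intro x hx
  obtain ⟨hx0, hx1⟩ := hx
  set f : ℝ → ℝ := fun y => p (min (1 - x) (min (1 - y) (x + y - 1))) with hf
  have hcont : ContinuousOn f (Icc (1 - x) 1) := by
    apply hp.comp
    · fun_prop
    · intro y hy
      obtain ⟨hy1, hy2⟩ := hy
      constructor
      · simp only [le_min_iff]
        refine ⟨by linarith, by linarith, by linarith⟩
      · rcases le_total x (2/3) with h | h
        · rcases le_total (1 - y) (x + y - 1) with h2 | h2
          · calc min (1-x) (min (1-y) (x+y-1)) ≤ min (1-y) (x+y-1) := min_le_right _ _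
              _ = 1 - y := min_eq_left h2
              _ ≤ 1/3 := by linarith
          · calc min (1-x) (min (1-y) (x+y-1)) ≤ min (1-y) (x+y-1) := min_le_right _ _
              _ = x + y - 1 := min_eq_right h2
              _ ≤ 1/3 := by linarith
        · calc min (1-x) (min (1-y) (x+y-1)) ≤ 1 - x := min_le_left _ _
            _ ≤ 1/3 := by linarith
  have hint : ∀ a b : ℝ, a ∈ Icc (1-x) 1 → b ∈ Icc (1-x) 1 →
      IntervalIntegrable f MeasureTheory.volume a b := by
    intro a b ha hb
    exact (hcont.mono (uIcc_subset_Icc ha hb)).intervalIntegrable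
  constructor
  · intro hle
    have hm : (1 - x/2) ∈ Icc (1-x) 1 := ⟨by linarith, by linarith⟩
    have split : (∫ y in (1-x)..1, f y)
        = (∫ y in (1-x)..(1-x/2), f y) + ∫ y in (1-x/2)..1, f y :=
      (integral_add_adjacent_intervals (hint _ _ ⟨le_refl _, by linarith⟩ hm)
        (hint _ _ hm ⟨by linarith, le_refl _⟩)).symm
    have e1 : (∫ y in (1-x)..(1-x/2), f y) = ∫ t in (0:ℝ)..(x/2), p t := by
      have hc : (∫ y in (1-x)..(1-x/2), f y) = ∫ y in (1-x)..(1-x/2), p (y + (x-1)) := by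
        apply integral_congr
        intro y hy
        rw [uIcc_of_le (by linarith)] at hy
        obtain ⟨h1, h2⟩ := hy
        show p (min (1-x) (min (1-y) (x+y-1))) = _
        rw [min_eq_right (by linarith : x+y-1 ≤ 1-y),
            min_eq_right (by linarith : x+y-1 ≤ 1-x)]
        congr 1; ring
      rw [hc, integral_comp_add_right p (x-1)]
      have h0 : 1 - x + (x-1) = 0 := by ring
      have h1 : 1 - x/2 + (x-1) = x/2 := by ring
      rw [h0, h1]
    have e2 : (∫ y in (1-x/2)..1, f y) = ∫ t in (0:ℝ)..(x/2), p t := by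
      have hc : (∫ y in (1-x/2)..1, f y) = ∫ y in (1-x/2)..1, p (1 - y) := by
        apply integral_congr
        intro y hy
        rw [uIcc_of_le (by linarith)] at hy
        obtain ⟨h1, h2⟩ := hy
        show p (min (1-x) (min (1-y) (x+y-1))) = _
        rw [min_eq_left (by linarith : 1-y ≤ x+y-1),
            min_eq_right (by linarith : 1-y ≤ 1-x)]
      rw [hc, integral_comp_sub_left p 1]
      have h0 : (1:ℝ) - 1 = 0 := by ring
      have h1 : 1 - (1 - x/2) = x/2 := by ring
      rw [h0, h1]
    rw [split, e1, e2]; ring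
  · intro hge
    have hm1 : (2 - 2*x) ∈ Icc (1-x) 1 := ⟨by linarith, by linarith⟩
    have hm2 : x ∈ Icc (1-x) 1 := ⟨by linarith, by linarith⟩
    have split1 : (∫ y in (1-x)..1, f y)
        = (∫ y in (1-x)..(2-2*x), f y) + ∫ y in (2-2*x)..1, f y :=
      (integral_add_adjacent_intervals (hint _ _ ⟨le_refl _, by linarith⟩ hm1)
        (hint _ _ hm1 ⟨by linarith, le_refl _⟩)).symm
    have split2 : (∫ y in (2-2*x)..1, f y)
        = (∫ y in (2-2*x)..x, f y) + ∫ y in x..1, f y :=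
      (integral_add_adjacent_intervals (hint _ _ hm1 hm2)
        (hint _ _ hm2 ⟨by linarith, le_refl _⟩)).symm
    have eA : (∫ y in (1-x)..(2-2*x), f y) = ∫ t in (0:ℝ)..(1-x), p t := by
      have hc : (∫ y in (1-x)..(2-2*x), f y) = ∫ y in (1-x)..(2-2*x), p (y + (x-1)) := by
        apply integral_congr
        intro y hy
        rw [uIcc_of_le (by linarith)] at hy
        obtain ⟨h1, h2⟩ := hy
        show p (min (1-x) (min (1-y) (x+y-1))) = _
        rw [min_eq_right (by linarith : x+y-1 ≤ 1-y),
            min_eq_right (by linarith : x+y-1 ≤ 1-x)]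
        congr 1; ring
      rw [hc, integral_comp_add_right p (x-1)]
      have h0 : 1 - x + (x-1) = 0 := by ring
      have h1 : 2 - 2*x + (x-1) = 1 - x := by ring
      rw [h0, h1]
    have eB : (∫ y in (2-2*x)..x, f y) = (3*x - 2) * p (1-x) := by
      have hc : (∫ y in (2-2*x)..x, f y) = ∫ _y in (2-2*x)..x, p (1-x) := by
        apply integral_congr
        intro y hy
        rw [uIcc_of_le (by linarith)] at hy
        obtain ⟨h1, h2⟩ := hy
        show p (min (1-x) (min (1-y) (x+y-1))) = _
        rw [min_eq_left]
        exact le_min (by linarith) (by linarith)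
      rw [hc, integral_const, smul_eq_mul]
      ring
    have eC : (∫ y in x..1, f y) = ∫ t in (0:ℝ)..(1-x), p t := by
      have hc : (∫ y in x..1, f y) = ∫ y in x..1, p (1 - y) := by
        apply integral_congr
        intro y hy
        rw [uIcc_of_le (by linarith)] at hy
        obtain ⟨h1, h2⟩ := hy
        show p (min (1-x) (min (1-y) (x+y-1))) = _
        rw [min_eq_left (by linarith : 1-y ≤ x+y-1),
            min_eq_right (by linarith : 1-y ≤ 1-x)]
      rw [hc, integral_comp_sub_left p 1]
      have h0 : (1:ℝ) - 1 = 0 := by ring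
      rw [h0]
    rw [split1, split2, eA, eB, eC]; ring
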